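/- Let λ ≥ 0 and suppose that for every positive integer N the classical Margulis walk operator M_N on functions (ZMod N)² → ℂ satisfies ‖M_N g‖₂ ≤ λ·‖g‖₂ whenever Σ_v g(v) = 0. Let f : ℝ² → ℂ be continuous with compact support and ∫_{ℝ²} f(v) dv = 0, and let M_∞ be the continuous Margulis operator, (M_∞ f)(v) = (1/8)·Σ_{T∈𝒮_ℝ} f(T⁻¹(v)). Then ‖M_∞ f‖_{L²(ℝ²)} ≤ λ·‖f‖_{L²(ℝ²)}. -/

import Mathlib

set_option maxHeartbeats 1600000

open Matrix BigOperators MeasureTheory Filter Topology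
open scoped ENNReal NNReal

noncomputable section

/-- The eight Margulis transformations, over any commutative ring.
Indices 0–3 are `T₁(v) = S₁v`, `T₂(v) = S₁v + (1,0)ᵀ`, `T₃(v) = S₂v`,
`T₄(v) = S₂v − (0,1)ᵀ` with `S₁ = [[1,2],[0,1]]`, `S₂ = [[1,0],[2,1]]`;
indices 4–7 are their respective inverses. -/
def marg {R : Type*} [CommRing R] : Fin 8 → R × R → R × R
  | 0 => fun v => (v.1 + 2 * v.2, v.2)
  | 1 => fun v => (v.1 + 2 * v.2 + 1, v.2)
  | 2 => fun v => (v.1, v.2 + 2 * v.1)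
  | 3 => fun v => (v.1, v.2 + 2 * v.1 - 1)
  | 4 => fun v => (v.1 - 2 * v.2, v.2)
  | 5 => fun v => (v.1 - 2 * v.2 - 1, v.2)
  | 6 => fun v => (v.1, v.2 - 2 * v.1)
  | 7 => fun v => (v.1, v.2 - 2 * v.1 + 1)

/-- The inverse of the `i`-th Margulis transformation (the family is closed under
inverses: `marg (i+4)` is the inverse of `marg i`). -/
def margInv {R : Type*} [CommRing R] (i : Fin 8) : R × R → R × R := marg (i + 4)


def smargI {R : Type*} [CommRing R] (c : R) : Fin 8 → R × R → R × R
  | 0 => fun v => (v.1 - 2 * v.2, v.2)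
  | 1 => fun v => (v.1 - 2 * v.2 - c, v.2)
  | 2 => fun v => (v.1, v.2 - 2 * v.1)
  | 3 => fun v => (v.1, v.2 - 2 * v.1 + c)
  | 4 => fun v => (v.1 + 2 * v.2, v.2)
  | 5 => fun v => (v.1 + 2 * v.2 + c, v.2)
  | 6 => fun v => (v.1, v.2 + 2 * v.1)
  | 7 => fun v => (v.1, v.2 + 2 * v.1 - c)

lemma margInv_eq_smargI {R : Type*} [CommRing R] (i : Fin 8) :
    (margInv i : R × R → R × R) = smargI 1 i := by
  fin_cases i <;> rfl

lemma smargI_mul {R : Type*} [CommRing R] (u c : R) (i : Fin 8) (w : R × R) :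
    (u * (smargI c i w).1, u * (smargI c i w).2) = smargI (u*c) i (u * w.1, u * w.2) := by
  fin_cases i <;> refine Prod.ext ?_ ?_ <;> simp only [smargI] <;> ring

lemma smargI_cast {M : ℕ} (k : ℕ) (i : Fin 8) (a : ℤ × ℤ) :
    (((smargI (k:ℤ) i a).1 : ZMod M), ((smargI (k:ℤ) i a).2 : ZMod M))
      = smargI (k : ZMod M) i ((a.1 : ZMod M), (a.2 : ZMod M)) := by
  fin_cases i <;> refine Prod.ext ?_ ?_ <;> simp only [smargI] <;> push_cast <;> ring

lemma smargI_div (k : ℕ) (hk : (k:ℝ) ≠ 0) (i : Fin 8) (a : ℤ × ℤ) :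
    (((smargI (k:ℤ) i a).1 : ℝ) / k, ((smargI (k:ℤ) i a).2 : ℝ) / k)
      = smargI (1:ℝ) i ((a.1 : ℝ) / k, (a.2 : ℝ) / k) := by
  fin_cases i <;> refine Prod.ext ?_ ?_ <;> simp only [smargI] <;> push_cast <;> field_simp <;> ring

lemma smargI_abs_le (k : ℕ) (i : Fin 8) (a : ℤ × ℤ) :
    |(smargI (k:ℤ) i a).1| ≤ 2 * |a.1| + 2 * |a.2| + k ∧
    |(smargI (k:ℤ) i a).2| ≤ 2 * |a.1| + 2 * |a.2| + k := by
  have h1 := le_abs_self a.1; have h2 := neg_abs_le a.1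
  have h3 := le_abs_self a.2; have h4 := neg_abs_le a.2
  have h5 : (0:ℤ) ≤ k := Int.natCast_nonneg k
  fin_cases i <;> constructor <;> simp only [smargI] <;> rw [abs_le] <;> constructor <;> linarith

def rbox (k : ℕ) (Rn : ℕ) : Finset (ℤ × ℤ) :=
  Finset.Icc (-(k*(Rn+1) : ℤ)) (k*(Rn+1)) ×ˢ Finset.Icc (-(k*(Rn+1) : ℤ)) (k*(Rn+1))

def castp (M : ℕ) (p : ℤ × ℤ) : ZMod M × ZMod M := ((p.1 : ZMod M), (p.2 : ZMod M))

lemma valMinAbs_castp {M : ℕ} [NeZero M] {p : ℤ × ℤ} (h1 : 2 * |p.1| < M) (h2 : 2 * |p.2| < M) :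
    ((castp M p).1.valMinAbs, (castp M p).2.valMinAbs) = p := by
  have key : ∀ z : ℤ, 2 * |z| < M → ((z : ZMod M)).valMinAbs = z := by
    intro z hz
    rw [ZMod.valMinAbs_spec]
    refine ⟨rfl, ?_, ?_⟩
    · have h1 := neg_abs_le z
      omega
    · have h1 := le_abs_self z
      omega
  exact Prod.ext (key _ h1) (key _ h2)

lemma mem_rbox_abs {k Rn : ℕ} {r : ℤ × ℤ} (hr : r ∈ rbox k Rn) :
    |r.1| ≤ (k * (Rn+1) : ℤ) ∧ |r.2| ≤ (k * (Rn+1) : ℤ) := by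
  rw [rbox, Finset.mem_product, Finset.mem_Icc, Finset.mem_Icc] at hr
  constructor <;>
    [rcases abs_cases r.1 with ⟨he,_⟩|⟨he,_⟩; rcases abs_cases r.2 with ⟨he,_⟩|⟨he,_⟩] <;> omega

lemma valMinAbs_castp_box {M k Rn : ℕ} [NeZero M] (h : 2 * (k * (Rn+1) : ℤ) < M) :
    ∀ p ∈ rbox k Rn, ((castp M p).1.valMinAbs, (castp M p).2.valMinAbs) = p := by
  intro p hp
  obtain ⟨h1, h2⟩ := mem_rbox_abs hp
  exact valMinAbs_castp (by omega) (by omega)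

lemma castp_inj_box {M k Rn : ℕ} [NeZero M] (h : 2 * (k * (Rn+1) : ℤ) < M) :
    ∀ p ∈ rbox k Rn, ∀ q ∈ rbox k Rn, castp M p = castp M q → p = q := by
  intro p hp q hq hpq
  have h1 := valMinAbs_castp_box h p hp
  rw [hpq, valMinAbs_castp_box h q hq] at h1
  exact h1.symm

lemma sum_valMinAbs_eq_box {M k Rn : ℕ} [NeZero M] {E : Type*} [AddCommMonoid E]
    (h : 2 * (k * (Rn+1) : ℤ) < M) (F : ℤ × ℤ → E)
    (hF : ∀ a : ℤ × ℤ, ¬((|a.1| ≤ k * Rn) ∧ (|a.2| ≤ k * Rn)) → F a = 0) :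
    ∑ v : ZMod M × ZMod M, F (v.1.valMinAbs, v.2.valMinAbs) = ∑ p ∈ rbox k Rn, F p := by
  classical
  symm
  calc ∑ p ∈ rbox k Rn, F p
      = ∑ p ∈ rbox k Rn, F ((castp M p).1.valMinAbs, (castp M p).2.valMinAbs) :=
        Finset.sum_congr rfl (fun p hp => by rw [valMinAbs_castp_box h p hp])
    _ = ∑ v ∈ (rbox k Rn).image (castp M), F (v.1.valMinAbs, v.2.valMinAbs) :=
        (Finset.sum_image (f := fun v : ZMod M × ZMod M => F (v.1.valMinAbs, v.2.valMinAbs))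
          (castp_inj_box h)).symm
    _ = ∑ v : ZMod M × ZMod M, F (v.1.valMinAbs, v.2.valMinAbs) := by
        apply Finset.sum_subset (Finset.subset_univ _)
        intro v _ hv
        apply hF
        rintro ⟨ha1, ha2⟩
        dsimp only at ha1 ha2
        apply hv
        rw [Finset.mem_image]
        refine ⟨(v.1.valMinAbs, v.2.valMinAbs), ?_, ?_⟩
        · rw [rbox, Finset.mem_product, Finset.mem_Icc, Finset.mem_Icc]
          have hb1 := neg_abs_le (ZMod.valMinAbs v.1)
          have hb2 := le_abs_self (ZMod.valMinAbs v.1)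
          have hb3 := neg_abs_le (ZMod.valMinAbs v.2)
          have hb4 := le_abs_self (ZMod.valMinAbs v.2)
          have hk1 : (k : ℤ) * Rn ≤ k * (Rn+1) := by nlinarith [Int.natCast_nonneg k]
          exact ⟨⟨by omega, by omega⟩, ⟨by omega, by omega⟩⟩
        · exact Prod.ext (ZMod.coe_valMinAbs v.1) (ZMod.coe_valMinAbs v.2)

lemma l2norm_triangle {ι : Type*} [Fintype ι] (a b : ι → ℂ) :
    Real.sqrt (∑ i, ‖a i + b i‖^2) ≤ Real.sqrt (∑ i, ‖a i‖^2) + Real.sqrt (∑ i, ‖b i‖^2) := by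
  have h := norm_add_le ((WithLp.equiv 2 (ι → ℂ)).symm a) ((WithLp.equiv 2 (ι → ℂ)).symm b)
  simpa [EuclideanSpace.norm_eq] using h

lemma f_zero_outside {Rf k : ℕ} (hk : 1 ≤ k) (f : ℝ×ℝ → ℂ)
    (hfs : ∀ x : ℝ×ℝ, (Rf:ℝ) < ‖x‖ → f x = 0)
    (a : ℤ×ℤ) (ha : ¬(|a.1| ≤ (k:ℤ) * Rf ∧ |a.2| ≤ (k:ℤ) * Rf)) :
    f ((a.1:ℝ)/k, (a.2:ℝ)/k) = 0 := by
  have hk0 : (0:ℝ) < k := by exact_mod_cast hk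
  apply hfs
  have key : ∀ z : ℤ, (k:ℤ) * Rf < |z| → (Rf:ℝ) < |(z:ℝ)/k| := by
    intro z hz
    have hz' : ((k:ℤ) * Rf : ℝ) + 1 ≤ |(z:ℝ)| := by
      rw [← Int.cast_abs]
      exact_mod_cast hz
    push_cast at hz'
    rw [abs_div, abs_of_pos hk0, lt_div_iff₀ hk0]
    nlinarith
  rcases not_and_or.mp ha with h | h
  · push_neg at h
    calc (Rf:ℝ) < |(a.1:ℝ)/k| := key _ h
      _ ≤ ‖((a.1:ℝ)/k, (a.2:ℝ)/k)‖ := by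
          rw [Prod.norm_def]; exact le_max_of_le_left (Real.norm_eq_abs _).symm.le
  · push_neg at h
    calc (Rf:ℝ) < |(a.2:ℝ)/k| := key _ h
      _ ≤ ‖((a.1:ℝ)/k, (a.2:ℝ)/k)‖ := by
          rw [Prod.norm_def]; exact le_max_of_le_right (Real.norm_eq_abs _).symm.le

lemma key_ineq (lam : ℝ) (hlam : 0 ≤ lam) (k M Rf : ℕ) [NeZero M] (hk : 1 ≤ k)
    (hcop : Nat.Coprime k M) (hkM : (k:ℝ) ≤ M)
    (hsize : (8 * ((k:ℤ) * ((3*Rf+1)+1)) + 2*k : ℤ) < M)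
    (f : ℝ×ℝ → ℂ)
    (hfs : ∀ x : ℝ×ℝ, (Rf:ℝ) < ‖x‖ → f x = 0)
    (hcl : ∀ g : ZMod M × ZMod M → ℂ, (∑ v, g v) = 0 →
        Real.sqrt (∑ v, ‖(1 / 8 : ℂ) * ∑ i : Fin 8, g (margInv i v)‖ ^ 2)
          ≤ lam * Real.sqrt (∑ v, ‖g v‖ ^ 2)) :
    Real.sqrt (∑ p ∈ rbox k (3*Rf+1),
        ‖(k:ℂ)⁻¹ * ((1/8:ℂ) * ∑ i : Fin 8, f (margInv i ((p.1:ℝ)/k, (p.2:ℝ)/k)))‖^2)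
      ≤ lam * (Real.sqrt (∑ p ∈ rbox k Rf, ‖(k:ℂ)⁻¹ * f ((p.1:ℝ)/k,(p.2:ℝ)/k)‖^2)
            + ‖((k:ℝ)^2)⁻¹ • ∑ p ∈ rbox k Rf, f ((p.1:ℝ)/k,(p.2:ℝ)/k)‖)
        + ‖((k:ℝ)^2)⁻¹ • ∑ p ∈ rbox k Rf, f ((p.1:ℝ)/k,(p.2:ℝ)/k)‖ := by
  classical
  have hk0 : (0:ℝ) < k := by exact_mod_cast hk
  have hM0 : (0:ℝ) < M := lt_of_lt_of_le hk0 hkM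
  have hMne : (M:ℂ) ≠ 0 := Nat.cast_ne_zero.mpr (NeZero.ne M)
  set RM : ℕ := 3*Rf+1 with hRM
  set u : ZMod M := (k : ZMod M) with hu
  set g : ZMod M × ZMod M → ℂ :=
    fun v => (k:ℂ)⁻¹ * f ((v.1.valMinAbs:ℝ)/k, (v.2.valMinAbs:ℝ)/k) with hg
  set S : ℂ := ∑ v, g v with hS
  set c0 : ℂ := S / ((M:ℂ)^2) with hc0
  set g' : ZMod M × ZMod M → ℂ := fun v => g v - c0 with hg'
  have hcard : (Fintype.card (ZMod M × ZMod M)) = M^2 := by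
    simp [ZMod.card]; ring
  have hmean : ∑ v, g' v = 0 := by
    rw [hg', Finset.sum_sub_distrib, Finset.sum_const, Finset.card_univ, hcard, ← hS, hc0,
      nsmul_eq_mul]
    push_cast
    field_simp
    simp
  -- the conjugated function
  set uu : (ZMod M)ˣ := ZMod.unitOfCoprime k hcop with huu
  have huc : ((uu : (ZMod M)ˣ) : ZMod M) = u := ZMod.coe_unitOfCoprime _ _
  set ψ : (ZMod M × ZMod M) ≃ (ZMod M × ZMod M) :=
    Equiv.prodCongr (Units.mulLeft uu) (Units.mulLeft uu) with hψdef
  have hψ : ∀ w : ZMod M × ZMod M, ψ w = (u * w.1, u * w.2) := by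
    rintro ⟨w1, w2⟩
    simp [hψdef, huc]
  set h : ZMod M × ZMod M → ℂ := fun w => g' (ψ w) with hh
  have hhm : ∑ w, h w = 0 := by
    rw [hh, ← hmean]
    exact Equiv.sum_comp ψ g'
  have hstep := hcl h hhm
  -- operator notation
  set P : (ZMod M × ZMod M → ℂ) → (ZMod M × ZMod M → ℂ) :=
    fun q v => (1/8:ℂ) * ∑ i : Fin 8, q (smargI u i v) with hP
  have hconj : ∀ w : ZMod M × ZMod M, ∀ i : Fin 8, ψ (margInv i w) = smargI u i (ψ w) := by
    intro w i
    calc ψ (margInv i w) = (u * (margInv i w).1, u * (margInv i w).2) := hψ _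
      _ = (u * (smargI 1 i w).1, u * (smargI 1 i w).2) := by rw [margInv_eq_smargI]
      _ = smargI (u*1) i (u * w.1, u * w.2) := smargI_mul u 1 i w
      _ = smargI u i (ψ w) := by rw [mul_one, hψ]
  -- rewrite hstep
  have hstep2 : Real.sqrt (∑ v, ‖P g' v‖^2) ≤ lam * Real.sqrt (∑ v, ‖g' v‖^2) := by
    have hL : ∀ w, (1/8:ℂ) * ∑ i : Fin 8, h (margInv i w) = P g' (ψ w) := by
      intro w
      rw [hP]
      congr 1
      exact Finset.sum_congr rfl fun i _ => congrArg g' (hconj w i)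
    have e1 : ∑ v, ‖(1 / 8 : ℂ) * ∑ i : Fin 8, h (margInv i v)‖ ^ 2
        = ∑ v, ‖P g' v‖^2 := by
      rw [Finset.sum_congr rfl fun v _ => by rw [hL v]]
      exact Equiv.sum_comp ψ (fun v => ‖P g' v‖^2)
    have e2 : ∑ v, ‖h v‖ ^ 2 = ∑ v, ‖g' v‖^2 := by
      exact Equiv.sum_comp ψ (fun v => ‖g' v‖^2)
    rwa [e1, e2] at hstep
  
  -- size conditions
  have hsizeRM : 8 * ((k:ℤ) * ((RM:ℤ)+1)) + 2*k < M := by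
    have : ((RM:ℤ)+1) = (3*(Rf:ℤ)+1+1) := by rw [hRM]; push_cast; ring
    rw [this]; exact hsize
  have hknn : (0:ℤ) ≤ k := Int.natCast_nonneg k
  have hRMnn : (0:ℤ) ≤ (RM:ℤ) := Int.natCast_nonneg RM
  have hkRM : (0:ℤ) ≤ (k:ℤ) * ((RM:ℤ)+1) := by positivity
  have hsz2 : 2 * ((k:ℤ) * ((RM:ℤ)+1)) < M := by linarith
  have hszf : 2 * ((k:ℤ) * ((Rf:ℤ)+1)) < M := by
    have h1 : (k:ℤ) * ((Rf:ℤ)+1) ≤ (k:ℤ) * ((RM:ℤ)+1) := by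
      apply mul_le_mul_of_nonneg_left _ hknn
      rw [hRM]; push_cast; linarith [Int.natCast_nonneg Rf]
    linarith
  -- (ii) P g = P g' + constant
  have hPdiff : ∀ v, P g v = P g' v + c0 := by
    intro v
    rw [hP]
    simp only [hg']
    rw [Finset.sum_sub_distrib, Finset.sum_const]
    simp only [Finset.card_univ, Fintype.card_fin, nsmul_eq_mul]
    push_cast
    ring
  -- constant vector norm
  have hconst : Real.sqrt (∑ _v : ZMod M × ZMod M, ‖c0‖^2) = M * ‖c0‖ := by
    rw [Finset.sum_const, Finset.card_univ, hcard, nsmul_eq_mul]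
    push_cast
    rw [show ((M:ℝ)^2 * ‖c0‖^2) = ((M:ℝ)*‖c0‖)^2 by ring]
    exact Real.sqrt_sq (by positivity)
  -- identification of S with the box sum
  have hSbox : S = ∑ p ∈ rbox k Rf, (k:ℂ)⁻¹ * f ((p.1:ℝ)/k, (p.2:ℝ)/k) := by
    rw [hS]
    exact sum_valMinAbs_eq_box hszf (fun a => (k:ℂ)⁻¹ * f ((a.1:ℝ)/k, (a.2:ℝ)/k))
      (fun a ha => by rw [f_zero_outside hk f hfs a ha, mul_zero])
  have hgbox : ∑ v, ‖g v‖^2 = ∑ p ∈ rbox k Rf, ‖(k:ℂ)⁻¹ * f ((p.1:ℝ)/k, (p.2:ℝ)/k)‖^2 := by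
    exact sum_valMinAbs_eq_box hszf (fun a => ‖(k:ℂ)⁻¹ * f ((a.1:ℝ)/k, (a.2:ℝ)/k)‖^2)
      (fun a ha => by rw [f_zero_outside hk f hfs a ha, mul_zero]; simp)
  -- norm bookkeeping for the constant
  set T : ℂ := ∑ p ∈ rbox k Rf, f ((p.1:ℝ)/k, (p.2:ℝ)/k) with hT
  have hST : S = (k:ℂ)⁻¹ * T := by
    rw [hSbox, hT, Finset.mul_sum]
  have hkC : ‖(k:ℂ)⁻¹‖ = (k:ℝ)⁻¹ := by
    rw [norm_inv, Complex.norm_natCast]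
  have hnS : ‖S‖ = (k:ℝ)⁻¹ * ‖T‖ := by rw [hST, norm_mul, hkC]
  have hnc0 : ‖c0‖ = ‖S‖ / (M:ℝ)^2 := by
    rw [hc0, norm_div, norm_pow, Complex.norm_natCast]
  have hdelta : (M:ℝ) * ‖c0‖ ≤ ‖((k:ℝ)^2)⁻¹ • T‖ := by
    rw [hnc0, hnS, norm_smul, norm_inv, norm_pow, Real.norm_natCast]
    have h1 : (M:ℝ) * ((k:ℝ)⁻¹ * ‖T‖ / (M:ℝ)^2) = ‖T‖ / ((k:ℝ) * M) := by
      field_simp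
    rw [h1]
    rw [div_le_iff₀ (by positivity)]
    rw [show ((k:ℝ)^2)⁻¹ * ‖T‖ * ((k:ℝ) * M) = ‖T‖ * (M / k) by field_simp]
    have h2 : (1:ℝ) ≤ M / k := by
      rw [le_div_iff₀ hk0]; linarith
    nlinarith [norm_nonneg T]
  -- the key pointwise identity on the box
  have hkey : ∀ p ∈ rbox k RM, P g (castp M p)
      = (k:ℂ)⁻¹ * ((1/8:ℂ) * ∑ i : Fin 8, f (margInv i ((p.1:ℝ)/k, (p.2:ℝ)/k))) := by
    intro p hp
    obtain ⟨hp1, hp2⟩ := mem_rbox_abs hp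
    have hterm : ∀ i : Fin 8, g (smargI u i (castp M p))
        = (k:ℂ)⁻¹ * f (margInv i ((p.1:ℝ)/k, (p.2:ℝ)/k)) := by
      intro i
      set b : ℤ × ℤ := smargI (k:ℤ) i p with hb
      have h1 : smargI u i (castp M p) = castp M b := by
        rw [hu, hb, castp, castp]
        exact (smargI_cast k i p).symm
      have habs := smargI_abs_le k i p
      rw [← hb] at habs
      have hvma : ((castp M b).1.valMinAbs, (castp M b).2.valMinAbs) = b := by
        apply valMinAbs_castp
        · have := habs.1; omega
        · have := habs.2; omega
      have e1 : (castp M b).1.valMinAbs = b.1 := congrArg Prod.fst hvma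
      have e2 : (castp M b).2.valMinAbs = b.2 := congrArg Prod.snd hvma
      rw [h1, hg]
      simp only [e1, e2]
      congr 1
      rw [margInv_eq_smargI, hb]
      exact congrArg f (smargI_div k (ne_of_gt hk0) i p)
    rw [hP]
    simp only [hterm]
    rw [← Finset.mul_sum]
    ring
  -- lower bound of the full ℓ² norm by the box sum
  have himg : ∑ p ∈ rbox k RM, ‖P g (castp M p)‖^2 ≤ ∑ v, ‖P g v‖^2 := by
    calc ∑ p ∈ rbox k RM, ‖P g (castp M p)‖^2
        = ∑ v ∈ (rbox k RM).image (castp M), ‖P g v‖^2 :=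
          (Finset.sum_image (f := fun v => ‖P g v‖^2) (castp_inj_box hsz2)).symm
      _ ≤ ∑ v, ‖P g v‖^2 :=
          Finset.sum_le_sum_of_subset_of_nonneg (Finset.subset_univ _)
            (fun v _ _ => by positivity)
  -- triangle inequalities
  have htri1 : Real.sqrt (∑ v, ‖P g v‖^2)
      ≤ Real.sqrt (∑ v, ‖P g' v‖^2) + Real.sqrt (∑ _v : ZMod M × ZMod M, ‖c0‖^2) := by
    have := l2norm_triangle (fun v => P g' v) (fun _ => c0)
    have he : ∑ v, ‖P g v‖^2 = ∑ v, ‖P g' v + c0‖^2 :=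
      Finset.sum_congr rfl (fun v _ => by rw [hPdiff v])
    rw [he]
    exact this
  have htri2 : Real.sqrt (∑ v, ‖g' v‖^2)
      ≤ Real.sqrt (∑ v, ‖g v‖^2) + Real.sqrt (∑ _v : ZMod M × ZMod M, ‖c0‖^2) := by
    have := l2norm_triangle (fun v => g v) (fun _ => -c0)
    have he : ∑ v, ‖g' v‖^2 = ∑ v, ‖g v + -c0‖^2 :=
      Finset.sum_congr rfl (fun v _ => by rw [hg']; ring_nf)
    have he2 : (∑ _v : ZMod M × ZMod M, ‖-c0‖^2) = ∑ _v : ZMod M × ZMod M, ‖c0‖^2 :=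
      Finset.sum_congr rfl (fun v _ => by rw [norm_neg])
    rw [he]
    rw [he2] at this
    exact this
  -- final chain
  calc Real.sqrt (∑ p ∈ rbox k RM,
        ‖(k:ℂ)⁻¹ * ((1/8:ℂ) * ∑ i : Fin 8, f (margInv i ((p.1:ℝ)/k, (p.2:ℝ)/k)))‖^2)
      = Real.sqrt (∑ p ∈ rbox k RM, ‖P g (castp M p)‖^2) :=
        congrArg Real.sqrt (Finset.sum_congr rfl (fun p hp => by rw [hkey p hp]))
    _ ≤ Real.sqrt (∑ v, ‖P g v‖^2) := Real.sqrt_le_sqrt himg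
    _ ≤ Real.sqrt (∑ v, ‖P g' v‖^2) + Real.sqrt (∑ _v : ZMod M × ZMod M, ‖c0‖^2) := htri1
    _ ≤ lam * Real.sqrt (∑ v, ‖g' v‖^2) + (M:ℝ) * ‖c0‖ := by
        rw [hconst]; exact add_le_add_left hstep2 _
    _ ≤ lam * (Real.sqrt (∑ v, ‖g v‖^2) + (M:ℝ) * ‖c0‖) + (M:ℝ) * ‖c0‖ := by
        have := htri2
        rw [hconst] at this
        exact add_le_add_left (mul_le_mul_of_nonneg_left this hlam) _
    _ ≤ lam * (Real.sqrt (∑ p ∈ rbox k Rf, ‖(k:ℂ)⁻¹ * f ((p.1:ℝ)/k,(p.2:ℝ)/k)‖^2)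
          + ‖((k:ℝ)^2)⁻¹ • T‖) + ‖((k:ℝ)^2)⁻¹ • T‖ := by
        rw [← hgbox]
        exact add_le_add (mul_le_mul_of_nonneg_left (add_le_add_right hdelta _) hlam) hdelta

lemma floor_div_le (k : ℕ) (hk : 1 ≤ k) (y : ℝ) :
    y - 1/k < (⌊(k:ℝ)*y⌋:ℝ)/k ∧ (⌊(k:ℝ)*y⌋:ℝ)/k ≤ y := by
  have hk0 : (0:ℝ) < k := by exact_mod_cast hk
  have h1 : (1/(k:ℝ)) * k = 1 := by field_simp
  constructor
  · rw [lt_div_iff₀ hk0]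
    nlinarith [Int.lt_floor_add_one ((k:ℝ)*y)]
  · rw [div_le_iff₀ hk0]
    have := Int.floor_le ((k:ℝ)*y)
    linarith


lemma riemann_tendsto {E : Type*} [NormedAddCommGroup E] [NormedSpace ℝ E] [CompleteSpace E]
    (φ : ℝ × ℝ → E) (hc : Continuous φ) (Rn : ℕ)
    (hs : ∀ x : ℝ × ℝ, (Rn:ℝ) < ‖x‖ → φ x = 0) :
    Tendsto (fun k : ℕ => ((k:ℝ)^2)⁻¹ •
        ∑ p ∈ rbox k Rn, φ ((p.1:ℝ)/k, (p.2:ℝ)/k)) atTop (𝓝 (∫ x, φ x)) := by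
  classical
  have hφc : HasCompactSupport φ := by
    apply HasCompactSupport.intro (isCompact_closedBall (0 : ℝ×ℝ) Rn)
    intro x hx
    apply hs
    simpa [Metric.mem_closedBall, dist_zero_right, not_le] using hx
  obtain ⟨x₀, hx₀⟩ := hc.norm.exists_forall_ge_of_hasCompactSupport hφc.norm
  set C : ℝ := ‖φ x₀‖ with hC
  have hC0 : 0 ≤ C := norm_nonneg _
  set ψ : ℕ → ℝ × ℝ → E := fun k x => φ ((⌊(k:ℝ)*x.1⌋:ℝ)/k, (⌊(k:ℝ)*x.2⌋:ℝ)/k) with hψ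
  set bound : ℝ × ℝ → ℝ := Set.indicator (Metric.closedBall 0 ((Rn:ℝ)+1)) (fun _ => C) with hbd
  have step1 : Tendsto (fun k : ℕ => ∫ x, ψ k x) atTop (𝓝 (∫ x, φ x)) := by
    apply tendsto_integral_filter_of_dominated_convergence bound
    · filter_upwards with k
      have hm : Measurable fun x : ℝ × ℝ => ((⌊(k:ℝ)*x.1⌋:ℝ)/k, (⌊(k:ℝ)*x.2⌋:ℝ)/k) := by
        have hcast : Measurable fun n : ℤ => (n:ℝ) := measurable_of_countable _
        exact ((hcast.comp ((measurable_const.mul measurable_fst).floor)).div_const _).prodMk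
          ((hcast.comp ((measurable_const.mul measurable_snd).floor)).div_const _)
      exact (hc.stronglyMeasurable.comp_measurable hm).aestronglyMeasurable
    · filter_upwards [eventually_ge_atTop 1] with k hk
      filter_upwards with x
      by_cases hx : x ∈ Metric.closedBall (0:ℝ×ℝ) ((Rn:ℝ)+1)
      · rw [hbd, Set.indicator_of_mem hx]; exact hx₀ _
      · rw [hbd, Set.indicator_of_notMem hx]
        have hxn : (Rn:ℝ)+1 < ‖x‖ := by
          simpa [Metric.mem_closedBall, dist_zero_right, not_le] using hx
        have hk0 : (0:ℝ) < k := by exact_mod_cast hk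
        have h1k : 1/(k:ℝ) ≤ 1 := by
          rw [div_le_one hk0]; exact_mod_cast hk
        have key : ψ k x = 0 := by
          apply hs
          have hxx : (Rn:ℝ)+1 < max ‖x.1‖ ‖x.2‖ := by rwa [← Prod.norm_def]
          rcases le_or_gt (‖x.1‖) (‖x.2‖) with hcmp | hcmp
          · have h2 : (Rn:ℝ)+1 < |x.2| := by
              rw [max_eq_right hcmp] at hxx; simpa using hxx
            have hb := floor_div_le k hk x.2
            have hro : (Rn:ℝ) < |(⌊(k:ℝ)*x.2⌋:ℝ)/k| := by
              rcases abs_cases x.2 with ⟨he, _⟩ | ⟨he, _⟩ <;>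
                rcases abs_cases ((⌊(k:ℝ)*x.2⌋:ℝ)/k) with ⟨hf, _⟩ | ⟨hf, _⟩ <;> linarith
            calc (Rn:ℝ) < |(⌊(k:ℝ)*x.2⌋:ℝ)/k| := hro
              _ ≤ ‖((⌊(k:ℝ)*x.1⌋:ℝ)/k, (⌊(k:ℝ)*x.2⌋:ℝ)/k)‖ := by
                  rw [Prod.norm_def]; exact le_max_of_le_right (Real.norm_eq_abs _).symm.le
          · have h2 : (Rn:ℝ)+1 < |x.1| := by
              rw [max_eq_left hcmp.le] at hxx; simpa using hxx
            have hb := floor_div_le k hk x.1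
            have hro : (Rn:ℝ) < |(⌊(k:ℝ)*x.1⌋:ℝ)/k| := by
              rcases abs_cases x.1 with ⟨he, _⟩ | ⟨he, _⟩ <;>
                rcases abs_cases ((⌊(k:ℝ)*x.1⌋:ℝ)/k) with ⟨hf, _⟩ | ⟨hf, _⟩ <;> linarith
            calc (Rn:ℝ) < |(⌊(k:ℝ)*x.1⌋:ℝ)/k| := hro
              _ ≤ ‖((⌊(k:ℝ)*x.1⌋:ℝ)/k, (⌊(k:ℝ)*x.2⌋:ℝ)/k)‖ := by
                  rw [Prod.norm_def]; exact le_max_of_le_left (Real.norm_eq_abs _).symm.le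
        rw [key]; simp
    · rw [hbd]
      refine (integrable_indicator_iff measurableSet_closedBall).mpr ?_
      exact integrableOn_const measure_closedBall_lt_top.ne
    · filter_upwards with x
      have hlim : ∀ y : ℝ, Tendsto (fun k : ℕ => (⌊(k:ℝ)*y⌋:ℝ)/k) atTop (𝓝 y) := by
        intro y
        apply tendsto_of_tendsto_of_tendsto_of_le_of_le'
          (g := fun k : ℕ => y - 1/k) (h := fun _ : ℕ => y)
        · simpa using (tendsto_const_nhds.sub tendsto_one_div_atTop_nhds_zero_nat :
            Tendsto (fun k : ℕ => y - 1/(k:ℝ)) atTop (𝓝 (y - 0)))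
        · exact tendsto_const_nhds
        · filter_upwards [eventually_ge_atTop 1] with k hk
          exact (floor_div_le k hk y).1.le
        · filter_upwards [eventually_ge_atTop 1] with k hk
          exact (floor_div_le k hk y).2
      exact (hc.tendsto _).comp (((hlim x.1).prodMk_nhds (hlim x.2)))
  have step2 : ∀ k : ℕ, 1 ≤ k → ∫ x, ψ k x
      = ((k:ℝ)^2)⁻¹ • ∑ p ∈ rbox k Rn, φ ((p.1:ℝ)/k, (p.2:ℝ)/k) := by
    intro k hk
    have hk0 : (0:ℝ) < k := by exact_mod_cast hk
    set Q : ℤ × ℤ → Set (ℝ × ℝ) := fun p =>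
      (Set.Ico ((p.1:ℝ)/k) (((p.1:ℝ)+1)/k)) ×ˢ (Set.Ico ((p.2:ℝ)/k) (((p.2:ℝ)+1)/k)) with hQ
    have hQm : ∀ p, MeasurableSet (Q p) := fun p => measurableSet_Ico.prod measurableSet_Ico
    have hQv : ∀ p, volume (Q p) = ENNReal.ofReal (1/k) * ENNReal.ofReal (1/k) := by
      intro p
      rw [hQ]
      rw [show (volume : Measure (ℝ×ℝ)) = (volume : Measure ℝ).prod volume from rfl]
      rw [Measure.prod_prod, Real.volume_Ico, Real.volume_Ico]
      have : ∀ z : ℝ, (z+1)/k - z/k = 1/k := by intro z; field_simp; ring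
      rw [this, this]
    have h1 : ∀ (z : ℤ) (y : ℝ), y ∈ Set.Ico ((z:ℝ)/k) (((z:ℝ)+1)/k) ↔ ⌊(k:ℝ)*y⌋ = z := by
      intro z y
      rw [Set.mem_Ico, Int.floor_eq_iff, div_le_iff₀ hk0, lt_div_iff₀ hk0]
      constructor <;> rintro ⟨a, b⟩ <;> constructor <;> push_cast at * <;> linarith
    have hmemQ : ∀ (p : ℤ × ℤ) (x : ℝ × ℝ), x ∈ Q p ↔ p = (⌊(k:ℝ)*x.1⌋, ⌊(k:ℝ)*x.2⌋) := by
      intro p x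
      simp only [hQ, Set.mem_prod]
      constructor
      · rintro ⟨ha, hb⟩
        simp only [h1] at ha hb
        exact Prod.ext ha.symm hb.symm
      · rintro rfl
        exact ⟨(h1 _ _).mpr rfl, (h1 _ _).mpr rfl⟩
    have hcomp : ∀ z : ℤ, ¬(-(k*(Rn+1) : ℤ) ≤ z ∧ z ≤ k*(Rn+1)) → (Rn:ℝ) < |(z:ℝ)/k| := by
      intro z hz
      have hz0 : (k*(Rn+1):ℤ) + 1 ≤ |z| := by rw [le_abs]; omega
      have hz' : ((k*(Rn+1):ℤ):ℝ) + 1 ≤ |(z:ℝ)| := by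
        rw [← Int.cast_abs]; exact_mod_cast hz0
      push_cast at hz'
      rw [abs_div, abs_of_pos hk0, lt_div_iff₀ hk0]
      nlinarith
    have claim1 : ∀ x : ℝ × ℝ, ψ k x
        = ∑ p ∈ rbox k Rn, (Q p).indicator (fun _ => φ ((p.1:ℝ)/k, (p.2:ℝ)/k)) x := by
      intro x
      set q : ℤ × ℤ := (⌊(k:ℝ)*x.1⌋, ⌊(k:ℝ)*x.2⌋) with hq
      by_cases hqb : q ∈ rbox k Rn
      · rw [Finset.sum_eq_single_of_mem q hqb]
        · rw [Set.indicator_of_mem ((hmemQ q x).mpr rfl)]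
        · intro p hp hpq
          exact Set.indicator_of_notMem (fun hx => hpq ((hmemQ p x).mp hx)) _
      · rw [Finset.sum_eq_zero (fun p hp => Set.indicator_of_notMem
          (fun hx => hqb (by rwa [(hmemQ p x).mp hx] at hp)) _)]
        apply hs
        rw [rbox, Finset.mem_product, Finset.mem_Icc, Finset.mem_Icc] at hqb
        rcases not_and_or.mp hqb with h | h
        · calc (Rn:ℝ) < |((q.1:ℝ))/k| := hcomp _ h
            _ ≤ ‖(((q.1:ℝ))/k, ((q.2:ℝ))/k)‖ := by
                rw [Prod.norm_def]; exact le_max_of_le_left (Real.norm_eq_abs _).symm.le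
        · calc (Rn:ℝ) < |((q.2:ℝ))/k| := hcomp _ h
            _ ≤ ‖(((q.1:ℝ))/k, ((q.2:ℝ))/k)‖ := by
                rw [Prod.norm_def]; exact le_max_of_le_right (Real.norm_eq_abs _).symm.le
    have hint : ∀ p ∈ rbox k Rn,
        Integrable ((Q p).indicator (fun _ => φ ((p.1:ℝ)/k, (p.2:ℝ)/k))) volume := by
      intro p _
      refine (integrable_indicator_iff (hQm p)).mpr ?_
      refine integrableOn_const ?_
      rw [hQv]
      exact (ENNReal.mul_lt_top ENNReal.ofReal_lt_top ENNReal.ofReal_lt_top).ne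
    calc ∫ x, ψ k x
        = ∫ x, ∑ p ∈ rbox k Rn, (Q p).indicator (fun _ => φ ((p.1:ℝ)/k, (p.2:ℝ)/k)) x := by
          exact integral_congr_ae (Eventually.of_forall claim1)
      _ = ∑ p ∈ rbox k Rn, ∫ x, (Q p).indicator (fun _ => φ ((p.1:ℝ)/k, (p.2:ℝ)/k)) x := by
          exact integral_finset_sum _ hint
      _ = ∑ p ∈ rbox k Rn, ((k:ℝ)^2)⁻¹ • φ ((p.1:ℝ)/k, (p.2:ℝ)/k) := by
          refine Finset.sum_congr rfl (fun p _ => ?_)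
          rw [integral_indicator_const _ (hQm p), Measure.real, hQv]
          congr 1
          rw [ENNReal.toReal_mul, ENNReal.toReal_ofReal (by positivity)]
          field_simp
      _ = ((k:ℝ)^2)⁻¹ • ∑ p ∈ rbox k Rn, φ ((p.1:ℝ)/k, (p.2:ℝ)/k) := by
          rw [Finset.smul_sum]
  refine step1.congr' ?_
  filter_upwards [eventually_ge_atTop 1] with k hk using step2 k hk

lemma smargI_norm_bound (Rf : ℝ) (i : Fin 8) (x : ℝ×ℝ)
    (h1 : |(smargI (1:ℝ) i x).1| ≤ Rf) (h2 : |(smargI (1:ℝ) i x).2| ≤ Rf) :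
    |x.1| ≤ 3*Rf+1 ∧ |x.2| ≤ 3*Rf+1 := by
  fin_cases i <;> simp only [smargI] at h1 h2 <;> rw [abs_le] at h1 h2 <;>
    constructor <;> rw [abs_le] <;> constructor <;> linarith

lemma smargI_cont (i : Fin 8) : Continuous (fun x : ℝ×ℝ => smargI (1:ℝ) i x) := by
  fin_cases i <;> simp only [smargI] <;> fun_prop


lemma elp_eq (q : ℝ×ℝ → ℂ) (hqc : Continuous q) (hqs : HasCompactSupport q) :
    eLpNorm q 2 volume = ENNReal.ofReal (Real.sqrt (∫ x : ℝ×ℝ, ‖q x‖^2)) := by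
  rw [(hqc.memLp_of_hasCompactSupport hqs).eLpNorm_eq_integral_rpow_norm
    (by norm_num) (by norm_num)]
  congr 1
  rw [Real.sqrt_eq_rpow]
  have h2 : (2 : ℝ≥0∞).toReal = (2:ℝ) := by simp
  rw [h2]
  norm_num


/-- if every finite Margulis walk operator `M_N` contracts mean-zero
functions on `(ZMod N)²` by `λ` in `ℓ²`, then the continuous Margulis operator
`(M_∞ f)(v) = (1/8)·Σ_T f(T⁻¹(v))` contracts every continuous, compactly supported,
mean-zero `f : ℝ² → ℂ` by `λ` in `L²(ℝ²)`. -/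
theorem continuous_margulis_expander (lam : ℝ) (hlam : 0 ≤ lam)
    (hclass : ∀ (N : ℕ) [NeZero N], ∀ g : ZMod N × ZMod N → ℂ, (∑ v, g v) = 0 →
      Real.sqrt (∑ v, ‖(1 / 8 : ℂ) * ∑ i : Fin 8, g (margInv i v)‖ ^ 2)
        ≤ lam * Real.sqrt (∑ v, ‖g v‖ ^ 2))
    (f : ℝ × ℝ → ℂ) (hf : Continuous f) (hsupp : HasCompactSupport f)
    (hmean : (∫ v, f v) = 0) :
    eLpNorm (fun v : ℝ × ℝ => (1 / 8 : ℂ) * ∑ i : Fin 8, f (margInv i v)) 2 volume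
      ≤ ENNReal.ofReal lam * eLpNorm f 2 volume := by
  classical
  -- a natural-number radius containing the support of f
  obtain ⟨r, hr⟩ := hsupp.isBounded.subset_closedBall (0 : ℝ×ℝ)
  set Rf : ℕ := ⌈r⌉₊ with hRf
  have hfs : ∀ x : ℝ×ℝ, (Rf:ℝ) < ‖x‖ → f x = 0 := by
    intro x hx
    by_contra hne
    have hx1 : x ∈ tsupport f := subset_tsupport f (by simpa [Function.mem_support] using hne)
    have hx2 : ‖x‖ ≤ r := by simpa [Metric.mem_closedBall, dist_zero_right] using hr hx1
    exact absurd (lt_of_lt_of_le hx (hx2.trans (Nat.le_ceil r))) (lt_irrefl _)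
  -- the averaged function
  set F : ℝ×ℝ → ℂ := fun v => (1 / 8 : ℂ) * ∑ i : Fin 8, f (margInv i v) with hFdef
  have hFc : Continuous F := by
    apply continuous_const.mul
    apply continuous_finset_sum
    intro i _
    have : Continuous (fun x : ℝ×ℝ => margInv i x) := by
      rw [margInv_eq_smargI]; exact smargI_cont i
    exact hf.comp this
  have hFs : ∀ x : ℝ×ℝ, ((3*Rf+1 : ℕ):ℝ) < ‖x‖ → F x = 0 := by
    intro x hx
    have hz : ∀ i : Fin 8, f (margInv i x) = 0 := by
      intro i
      apply hfs
      by_contra hle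
      push_neg at hle
      have hn1 : |(margInv i x).1| ≤ (Rf:ℝ) :=
        le_trans (by rw [← Real.norm_eq_abs]; exact norm_fst_le _) hle
      have hn2 : |(margInv i x).2| ≤ (Rf:ℝ) :=
        le_trans (by rw [← Real.norm_eq_abs]; exact norm_snd_le _) hle
      rw [margInv_eq_smargI] at hn1 hn2
      obtain ⟨hb1, hb2⟩ := smargI_norm_bound (Rf:ℝ) i x hn1 hn2
      have hxle : ‖x‖ ≤ 3*(Rf:ℝ)+1 := by
        rw [Prod.norm_def, Real.norm_eq_abs, Real.norm_eq_abs]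
        exact max_le hb1 hb2
      have : ((3*Rf+1 : ℕ):ℝ) = 3*(Rf:ℝ)+1 := by push_cast; ring
      rw [this] at hx
      linarith
    show (1 / 8 : ℂ) * ∑ i : Fin 8, f (margInv i x) = 0
    rw [Finset.sum_congr rfl (fun i _ => hz i)]
    simp
  have hFsupp : HasCompactSupport F := by
    apply HasCompactSupport.intro (isCompact_closedBall (0 : ℝ×ℝ) ((3*Rf+1 : ℕ):ℝ))
    intro x hx
    apply hFs
    simpa [Metric.mem_closedBall, dist_zero_right, not_le] using hx
  -- the three Riemann-sum limits
  have hA : Tendsto (fun k : ℕ => ((k:ℝ)^2)⁻¹ •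
      ∑ p ∈ rbox k (3*Rf+1), ‖F ((p.1:ℝ)/k, (p.2:ℝ)/k)‖^2) atTop
      (𝓝 (∫ x : ℝ×ℝ, ‖F x‖^2)) :=
    riemann_tendsto _ ((hFc.norm).pow 2) (3*Rf+1)
      (fun x hx => by show ‖F x‖^2 = 0; rw [hFs x hx]; simp)
  have hB : Tendsto (fun k : ℕ => ((k:ℝ)^2)⁻¹ •
      ∑ p ∈ rbox k Rf, ‖f ((p.1:ℝ)/k, (p.2:ℝ)/k)‖^2) atTop
      (𝓝 (∫ x : ℝ×ℝ, ‖f x‖^2)) :=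
    riemann_tendsto _ ((hf.norm).pow 2) Rf
      (fun x hx => by show ‖f x‖^2 = 0; rw [hfs x hx]; simp)
  have hCm : Tendsto (fun k : ℕ => ((k:ℝ)^2)⁻¹ •
      ∑ p ∈ rbox k Rf, f ((p.1:ℝ)/k, (p.2:ℝ)/k)) atTop (𝓝 0) := by
    have := riemann_tendsto f hf Rf hfs
    rwa [hmean] at this
  have hCn : Tendsto (fun k : ℕ => ‖((k:ℝ)^2)⁻¹ •
      ∑ p ∈ rbox k Rf, f ((p.1:ℝ)/k, (p.2:ℝ)/k)‖) atTop (𝓝 0) := by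
    simpa using hCm.norm
  -- the eventual inequality from the finite models
  have hkeyev : ∀ᶠ k : ℕ in atTop,
      Real.sqrt (((k:ℝ)^2)⁻¹ • ∑ p ∈ rbox k (3*Rf+1), ‖F ((p.1:ℝ)/k, (p.2:ℝ)/k)‖^2)
        ≤ lam * (Real.sqrt (((k:ℝ)^2)⁻¹ • ∑ p ∈ rbox k Rf, ‖f ((p.1:ℝ)/k, (p.2:ℝ)/k)‖^2)
              + ‖((k:ℝ)^2)⁻¹ • ∑ p ∈ rbox k Rf, f ((p.1:ℝ)/k, (p.2:ℝ)/k)‖)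
          + ‖((k:ℝ)^2)⁻¹ • ∑ p ∈ rbox k Rf, f ((p.1:ℝ)/k, (p.2:ℝ)/k)‖ := by
    filter_upwards [eventually_ge_atTop (24*Rf+19)] with k hK
    have hk : 1 ≤ k := by omega
    have hk0 : (0:ℝ) < k := by exact_mod_cast hk
    set M : ℕ := k^2+1 with hM
    haveI : NeZero M := ⟨by omega⟩
    have hcop : Nat.Coprime k M := by
      have h1 : Nat.Coprime k (1 + k*k) :=
        (Nat.coprime_add_mul_right_right k 1 k).mpr (Nat.coprime_one_right k)
      have : M = 1 + k*k := by rw [hM]; ring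
      rwa [this]
    have hkM : (k:ℝ) ≤ M := by
      rw [hM]; push_cast; nlinarith
    have hsize : (8 * ((k:ℤ) * ((3*Rf+1)+1)) + 2*k : ℤ) < M := by
      rw [hM]
      have hKz : (24*(Rf:ℤ)+19) ≤ k := by exact_mod_cast hK
      push_cast
      nlinarith [Int.natCast_nonneg Rf]
    have hcl := hclass M
    have hmain := key_ineq lam hlam k M Rf hk hcop hkM hsize f hfs hcl
    -- translate sums
    have hkC : ‖(k:ℂ)⁻¹‖ = (k:ℝ)⁻¹ := by rw [norm_inv, Complex.norm_natCast]
    have hsq : ∀ z : ℂ, ‖(k:ℂ)⁻¹ * z‖^2 = ((k:ℝ)^2)⁻¹ * ‖z‖^2 := by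
      intro z
      rw [norm_mul, hkC, mul_pow, ← inv_pow]
    have eA : ((k:ℝ)^2)⁻¹ • (∑ p ∈ rbox k (3*Rf+1), ‖F ((p.1:ℝ)/k, (p.2:ℝ)/k)‖^2)
        = ∑ p ∈ rbox k (3*Rf+1),
            ‖(k:ℂ)⁻¹ * ((1/8:ℂ) * ∑ i : Fin 8, f (margInv i ((p.1:ℝ)/k, (p.2:ℝ)/k)))‖^2 := by
      rw [smul_eq_mul, Finset.mul_sum]
      exact Finset.sum_congr rfl fun p _ => by rw [hsq, hFdef]
    have eB : ((k:ℝ)^2)⁻¹ • (∑ p ∈ rbox k Rf, ‖f ((p.1:ℝ)/k, (p.2:ℝ)/k)‖^2)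
        = ∑ p ∈ rbox k Rf, ‖(k:ℂ)⁻¹ * f ((p.1:ℝ)/k, (p.2:ℝ)/k)‖^2 := by
      rw [smul_eq_mul, Finset.mul_sum]
      exact Finset.sum_congr rfl fun p _ => by rw [hsq]
    rw [eA, eB]
    exact hmain
  -- pass to the limit
  have lim1 : Tendsto (fun k : ℕ => Real.sqrt (((k:ℝ)^2)⁻¹ •
      ∑ p ∈ rbox k (3*Rf+1), ‖F ((p.1:ℝ)/k, (p.2:ℝ)/k)‖^2)) atTop
      (𝓝 (Real.sqrt (∫ x : ℝ×ℝ, ‖F x‖^2))) :=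
    (Real.continuous_sqrt.tendsto _).comp hA
  have lim2 : Tendsto (fun k : ℕ =>
      lam * (Real.sqrt (((k:ℝ)^2)⁻¹ • ∑ p ∈ rbox k Rf, ‖f ((p.1:ℝ)/k, (p.2:ℝ)/k)‖^2)
          + ‖((k:ℝ)^2)⁻¹ • ∑ p ∈ rbox k Rf, f ((p.1:ℝ)/k, (p.2:ℝ)/k)‖)
        + ‖((k:ℝ)^2)⁻¹ • ∑ p ∈ rbox k Rf, f ((p.1:ℝ)/k, (p.2:ℝ)/k)‖) atTop
      (𝓝 (lam * (Real.sqrt (∫ x : ℝ×ℝ, ‖f x‖^2) + 0) + 0)) :=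
    (tendsto_const_nhds.mul (((Real.continuous_sqrt.tendsto _).comp hB).add hCn)).add hCn
  have hle : Real.sqrt (∫ x : ℝ×ℝ, ‖F x‖^2)
      ≤ lam * (Real.sqrt (∫ x : ℝ×ℝ, ‖f x‖^2) + 0) + 0 :=
    le_of_tendsto_of_tendsto lim1 lim2 hkeyev
  rw [add_zero, add_zero] at hle
  -- convert to eLpNorm
  rw [elp_eq F hFc hFsupp, elp_eq f hf hsupp, ← ENNReal.ofReal_mul hlam]
  exact ENNReal.ofReal_le_ofReal hle
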